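/- Let p be a prime with p ≡ 1 or 3 (mod 8) such that 2p ≡ 2 (mod 12) (equivalently p ≡ 1 (mod 6)). Then A(2p) ≡ 0 (mod 4). -/

import Mathlib

set_option maxHeartbeats 2000000


lemma neg_six_sq (p : ℕ) (hp : p.Prime) (h24 : p % 24 = 1) : IsSquare (-6 : ZMod p) := by
  haveI : Fact p.Prime := ⟨hp⟩
  have hp2 : p ≠ 2 := by omega
  have s1 : IsSquare (-1 : ZMod p) := ZMod.exists_sq_eq_neg_one_iff.mpr (by omega)
  have s2 : IsSquare (2 : ZMod p) := (ZMod.exists_sq_eq_two_iff hp2).mpr (by omega)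
  haveI : Fact (Nat.Prime 3) := ⟨by norm_num⟩
  have s3 : IsSquare (3 : ZMod p) := by
    have h3 : IsSquare ((3:ℕ) : ZMod p) ↔ IsSquare ((p:ℕ) : ZMod 3) :=
      ZMod.exists_sq_eq_prime_iff_of_mod_four_eq_one (by omega) (by norm_num)
    have hp3 : ((p:ℕ) : ZMod 3) = 1 := by
      rw [← ZMod.natCast_mod, (by omega : p % 3 = 1), Nat.cast_one]
    have : IsSquare ((p:ℕ) : ZMod 3) := by rw [hp3]; exact IsSquare.one
    have := h3.mpr this
    simpa using this
  have := (s1.mul s2).mul s3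
  rw [show (-6 : ZMod p) = -1 * 2 * 3 by ring]
  exact this

-- integer square root of -6 mod p
lemma exists_t (p : ℕ) (hp : p.Prime) (h24 : p % 24 = 1) :
    ∃ t : ℤ, (p:ℤ) ∣ t^2 + 6 := by
  obtain ⟨r, hr⟩ := neg_six_sq p hp h24
  haveI : NeZero p := ⟨hp.ne_zero⟩
  refine ⟨(r.val : ℤ), ?_⟩
  rw [← ZMod.intCast_zmod_eq_zero_iff_dvd]
  push_cast
  rw [ZMod.natCast_val, ZMod.cast_id]
  rw [show (r:ZMod p)^2 = r*r by ring, ← hr]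
  ring


lemma thue (p : ℕ) (hp : p.Prime) (t : ℤ) :
    ∃ a b : ℤ, (p:ℤ) ∣ (a - t*b) ∧ (a ≠ 0 ∨ b ≠ 0) ∧ a^2 < p ∧ b^2 < p := by
  haveI : Fact p.Prime := ⟨hp⟩
  haveI : NeZero p := ⟨hp.ne_zero⟩
  set r : ℕ := Nat.sqrt p with hr
  have hrlt : r * r < p := by
    rcases Nat.lt_or_ge (r*r) p with h | h
    · exact h
    · exfalso
      have h1 : r * r ≤ p := by have := Nat.sqrt_le' p; nlinarith
      have h2 : r * r = p := le_antisymm h1 h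
      rcases (Nat.prime_mul_iff.mp (h2 ▸ hp)) with ⟨h3, h4⟩ | ⟨h3, h4⟩ <;>
        (rw [h4] at h2; have := hp.one_lt; omega)
  have hcard : p < ((Finset.Icc (0:ℤ) r) ×ˢ (Finset.Icc (0:ℤ) r)).card := by
    rw [Finset.card_product, Int.card_Icc]
    have : ((r:ℤ) + 1 - 0).toNat = r + 1 := by omega
    rw [this]
    have := Nat.lt_succ_sqrt' p
    nlinarith [Nat.sqrt_le' p]
  have hmap : ∀ x ∈ (Finset.Icc (0:ℤ) r) ×ˢ (Finset.Icc (0:ℤ) r),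
      ((x.1 - t*x.2 : ℤ) : ZMod p) ∈ (Finset.univ : Finset (ZMod p)) := by
    intro x _; exact Finset.mem_univ _
  have hlt : (Finset.univ : Finset (ZMod p)).card < ((Finset.Icc (0:ℤ) r) ×ˢ (Finset.Icc (0:ℤ) r)).card := by
    rwa [Finset.card_univ, ZMod.card]
  obtain ⟨x, hx, y, hy, hxy, heq⟩ :=
    Finset.exists_ne_map_eq_of_card_lt_of_maps_to hlt hmap
  refine ⟨x.1 - y.1, x.2 - y.2, ?_, ?_, ?_, ?_⟩
  · rw [← ZMod.intCast_zmod_eq_zero_iff_dvd]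
    push_cast
    push_cast at heq
    linear_combination heq
  · by_contra h
    push_neg at h
    apply hxy
    have e1 : x.1 = y.1 := by linarith [h.1]
    have e2 : x.2 = y.2 := by linarith [h.2]
    exact Prod.ext e1 e2
  · simp only [Finset.mem_product, Finset.mem_Icc] at hx hy
    have : (x.1 - y.1)^2 ≤ (r:ℤ)*(r:ℤ) := by nlinarith [hx.1.1, hx.1.2, hy.1.1, hy.1.2]
    have hrp : ((r:ℤ)*(r:ℤ)) < (p:ℤ) := by exact_mod_cast hrlt
    linarith
  · simp only [Finset.mem_product, Finset.mem_Icc] at hx hy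
    have : (x.2 - y.2)^2 ≤ (r:ℤ)*(r:ℤ) := by nlinarith [hx.2.1, hx.2.2, hy.2.1, hy.2.2]
    have hrp : ((r:ℤ)*(r:ℤ)) < (p:ℤ) := by exact_mod_cast hrlt
    linarith


lemma cast_mod_nat (n : ℕ) [NeZero n] (p : ℕ) : ((p:ℕ) : ZMod n) = ((p % n : ℕ) : ZMod n) :=
  (ZMod.natCast_mod p n).symm

lemma no_2_3 (p : ℕ) (h8 : p % 8 = 1) (x y : ℤ) : 2*x^2 + 3*y^2 ≠ (p:ℤ) := by
  intro h
  have key : ∀ u v : ZMod 8, 2*u^2 + 3*v^2 ≠ 1 := by decide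
  apply key (x : ZMod 8) (y : ZMod 8)
  have hc := congrArg (fun z : ℤ => (z : ZMod 8)) h
  push_cast at hc
  rw [hc, cast_mod_nat 8 p, h8, Nat.cast_one]


lemma exists_rep (p : ℕ) (hp : p.Prime) (h24 : p % 24 = 1) :
    ∃ c d : ℤ, c^2 + 6*d^2 = (p:ℤ) := by
  have hpZ : Prime (p : ℤ) := Nat.prime_iff_prime_int.1 hp
  have hp0 : (0:ℤ) < p := by exact_mod_cast hp.pos
  obtain ⟨t, ht⟩ := exists_t p hp h24
  obtain ⟨a, b, hab, hne, ha2, hb2⟩ := thue p hp t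
  have hdvd : (p:ℤ) ∣ a^2 + 6*b^2 := by
    have h1 : a^2 + 6*b^2 = (a - t*b)*(a + t*b) + b^2*(t^2 + 6) := by ring
    rw [h1]
    exact dvd_add (hab.mul_right _) (ht.mul_left _)
  have hpos : 0 < a^2 + 6*b^2 := by
    rcases hne with h | h
    · have : 0 < a^2 := by positivity
      nlinarith [sq_nonneg b]
    · have : 0 < b^2 := by positivity
      nlinarith [sq_nonneg a]
  obtain ⟨k, hk⟩ := hdvd
  have hk1 : 1 ≤ k := by nlinarith
  have hk6 : k ≤ 6 := by nlinarith
  -- helper facts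
  have h8 : p % 8 = 1 := by omega
  interval_cases k
  · exact ⟨a, b, by linarith⟩
  · -- k = 2
    exfalso
    have haeven : Even a := by
      rcases Int.even_or_odd a with h | h
      · exact h
      · exfalso
        obtain ⟨m, rfl⟩ := h
        have hg : 4*m^2 + 4*m + 1 + 6*b^2 = (p:ℤ)*2 := by linear_combination hk
        generalize m^2 = M at hg
        generalize b^2 = B at hg
        omega
    obtain ⟨a1, rfl⟩ := haeven
    apply no_2_3 p h8 a1 b
    have hg : 2*(2*a1^2 + 3*b^2) = 2*(p:ℤ) := by linear_combination hk
    linarith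
  · -- k = 3
    exfalso
    have h3 : (3:ℤ) ∣ a := by
      have hd : (3:ℤ) ∣ a^2 := ⟨(p:ℤ) - 2*b^2, by linear_combination hk⟩
      exact Int.prime_three.dvd_of_dvd_pow hd
    obtain ⟨a1, rfl⟩ := h3
    apply no_2_3 p h8 b a1
    have hg : 3*(2*b^2 + 3*a1^2) = 3*(p:ℤ) := by linear_combination hk
    linarith
  · -- k = 4
    have haeven : Even a := by
      rcases Int.even_or_odd a with h | h
      · exact h
      · exfalso
        obtain ⟨m, rfl⟩ := h
        have hg : 4*m^2 + 4*m + 1 + 6*b^2 = (p:ℤ)*4 := by linear_combination hk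
        generalize m^2 = M at hg
        generalize b^2 = B at hg
        omega
    obtain ⟨a1, rfl⟩ := haeven
    have hbeven : Even b := by
      rcases Int.even_or_odd b with h | h
      · exact h
      · exfalso
        obtain ⟨m, rfl⟩ := h
        have hg : 4*a1^2 + 24*m^2 + 24*m + 6 = (p:ℤ)*4 := by linear_combination hk
        generalize a1^2 = M at hg
        generalize m^2 = B at hg
        omega
    obtain ⟨b1, rfl⟩ := hbeven
    refine ⟨a1, b1, ?_⟩
    have hg : 4*(a1^2 + 6*b1^2) = 4*(p:ℤ) := by linear_combination hk
    linarith
  · -- k = 5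
    exfalso
    have hp5 : Prime (5:ℤ) := by norm_num
    have h5 : (5:ℤ) ∣ (a - 2*b) * (a + 2*b) := ⟨(p:ℤ) - 2*b^2, by linear_combination hk⟩
    rcases hp5.dvd_mul.mp h5 with h | h
    · obtain ⟨m, hm⟩ := h
      apply no_2_3 p h8 (m+b) m
      have h25 : 25*(p:ℤ) = 25*(2*(m+b)^2 + 3*m^2) := by
        linear_combination -5*hk + 5*(a+2*b+5*m)*hm
      linarith
    · obtain ⟨m, hm⟩ := h
      apply no_2_3 p h8 (m-b) m
      have h25 : 25*(p:ℤ) = 25*(2*(m-b)^2 + 3*m^2) := by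
        linear_combination -5*hk + 5*(a-2*b+5*m)*hm
      linarith
  · -- k = 6
    have h3 : (3:ℤ) ∣ a := by
      have hd : (3:ℤ) ∣ a^2 := ⟨2*(p:ℤ) - 2*b^2, by linear_combination hk⟩
      exact Int.prime_three.dvd_of_dvd_pow hd
    obtain ⟨a1, rfl⟩ := h3
    have haeven : Even a1 := by
      rcases Int.even_or_odd a1 with h | h
      · exact h
      · exfalso
        obtain ⟨m, rfl⟩ := h
        have hg : 36*m^2 + 36*m + 9 + 6*b^2 = (p:ℤ)*6 := by linear_combination hk
        generalize m^2 = M at hg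
        generalize b^2 = B at hg
        omega
    obtain ⟨m, rfl⟩ := haeven
    refine ⟨b, m, ?_⟩
    have hg : 6*(b^2 + 6*m^2) = 6*(p:ℤ) := by linear_combination hk
    linarith


lemma U2 (p : ℕ) (hp : p.Prime) (a b c d : ℤ)
    (ha : a % 6 = 1) (hc : c % 6 = 1) (hb : b ≠ 0)
    (h1 : a^2 + 6*b^2 = (p:ℤ)) (h2 : c^2 + 6*d^2 = (p:ℤ)) :
    a = c ∧ (b = d ∨ b = -d) := by
  have hpZ : Prime (p : ℤ) := Nat.prime_iff_prime_int.1 hp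
  have hp0 : (0:ℤ) < p := by exact_mod_cast hp.pos
  have hpp : (0:ℤ) < (p:ℤ)*(p:ℤ) := mul_pos hp0 hp0
  have hdvd : (p:ℤ) ∣ (a*d - b*c) * (a*d + b*c) := ⟨d^2 - b^2, by linear_combination d^2*h1 - b^2*h2⟩
  have ha0 : a ≠ 0 := by omega
  rcases hpZ.dvd_mul.mp hdvd with hd1 | hd1
  · obtain ⟨k, hk⟩ := hd1
    have key : (a*c + 6*b*d)^2 + 6*((p:ℤ)*k)^2 = (p:ℤ)^2 := by
      rw [← hk]; linear_combination (c^2+6*d^2)*h1 + (p:ℤ)*h2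
    have hk0 : k = 0 := by
      by_contra h0
      have h1k : 1 ≤ k^2 := by rcases lt_or_gt_of_ne h0 with h|h <;> nlinarith
      nlinarith [sq_nonneg (a*c+6*b*d), mul_le_mul_of_nonneg_left h1k hpp.le]
    rw [hk0, mul_zero] at hk
    have hzero : a*d - b*c = 0 := by linarith
    have hsq : a^2 * (p:ℤ) = c^2 * (p:ℤ) := by
      linear_combination c^2*h1 - a^2*h2 + 6*(a*d+b*c)*hzero
    have hac2 : a^2 = c^2 := mul_right_cancel₀ (by positivity) hsq
    have hac : a = c := by
      have h' : (a - c) * (a + c) = 0 := by linear_combination hac2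
      rcases mul_eq_zero.mp h' with h'' | h'' <;> omega
    subst hac
    refine ⟨rfl, Or.inl ?_⟩
    have : a * b = a * d := by linarith [hzero]
    exact (mul_left_cancel₀ ha0 this)
  · obtain ⟨k, hk⟩ := hd1
    have key : (a*c - 6*b*d)^2 + 6*((p:ℤ)*k)^2 = (p:ℤ)^2 := by
      rw [← hk]; linear_combination (c^2+6*d^2)*h1 + (p:ℤ)*h2
    have hk0 : k = 0 := by
      by_contra h0
      have h1k : 1 ≤ k^2 := by rcases lt_or_gt_of_ne h0 with h|h <;> nlinarith
      nlinarith [sq_nonneg (a*c-6*b*d), mul_le_mul_of_nonneg_left h1k hpp.le]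
    rw [hk0, mul_zero] at hk
    have hzero : a*d + b*c = 0 := by linarith
    have hsq : a^2 * (p:ℤ) = c^2 * (p:ℤ) := by
      linear_combination c^2*h1 - a^2*h2 + 6*(a*d-b*c)*hzero
    have hac2 : a^2 = c^2 := mul_right_cancel₀ (by positivity) hsq
    have hac : a = c := by
      have h' : (a - c) * (a + c) = 0 := by linear_combination hac2
      rcases mul_eq_zero.mp h' with h'' | h'' <;> omega
    subst hac
    refine ⟨rfl, Or.inr ?_⟩
    have : a * b = a * (-d) := by linarith [hzero]
    exact (mul_left_cancel₀ ha0 this)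


lemma U1 (p : ℕ) (hp : p.Prime) (hodd : p % 2 = 1) (a b c d : ℤ)
    (ha : a % 6 = 1) (hb : b % 6 = 1) (hc : c % 6 = 1) (hd : d % 6 = 1)
    (h1 : a^2 + b^2 = 2*(p:ℤ)) (h2 : c^2 + d^2 = 2*(p:ℤ)) :
    (a = c ∧ b = d) ∨ (a = d ∧ b = c) := by
  have hpZ : Prime (p : ℤ) := Nat.prime_iff_prime_int.1 hp
  have hp0 : (0:ℤ) < p := by exact_mod_cast hp.pos
  have hpp : (0:ℤ) < (p:ℤ)*(p:ℤ) := mul_pos hp0 hp0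
  have hpodd : (p:ℤ) % 2 = 1 := by omega
  have ha0 : a ≠ 0 := by omega
  have hdvd : (p:ℤ) ∣ (a*d - b*c) * (a*d + b*c) :=
    ⟨2*(d^2 - b^2), by linear_combination d^2*h1 - b^2*h2⟩
  -- ac + bd ≢ 0 mod 6, similarly ac - bd ≡ 0 mod 6? ac ≡ 1, bd ≡ 1 mod 6
  have ha2 : a % 2 = 1 := by omega
  have hb2 : b % 2 = 1 := by omega
  have hc2 : c % 2 = 1 := by omega
  have hd2 : d % 2 = 1 := by omega
  have hac6 : (a*c) % 6 = 1 := by rw [Int.mul_emod, ha, hc]; rfl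
  have hbd6 : (b*d) % 6 = 1 := by rw [Int.mul_emod, hb, hd]; rfl
  have hacbd : a*c + b*d ≠ 0 := by omega
  rcases hpZ.dvd_mul.mp hdvd with hd1 | hd1
  · obtain ⟨k, hk⟩ := hd1
    have key : (a*c + b*d)^2 + ((p:ℤ)*k)^2 = 4*(p:ℤ)^2 := by
      rw [← hk]; linear_combination (c^2+d^2)*h1 + 2*(p:ℤ)*h2
    -- k is even since a*d - b*c is even and p odd
    have hkeven : k % 2 = 0 := by
      have h2dvd : (a*d - b*c) % 2 = 0 := by
        have e1 : (a*d) % 2 = 1 := by rw [Int.mul_emod, ha2, hd2]; rfl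
        have e2 : (b*c) % 2 = 1 := by rw [Int.mul_emod, hb2, hc2]; rfl
        omega
      rw [hk] at h2dvd
      rcases Int.emod_two_eq k with h | h
      · exact h
      · exfalso
        have : ((p:ℤ)*k) % 2 = 1 := by rw [Int.mul_emod, hpodd, h]; rfl
        omega
    have hk0 : k = 0 := by
      by_contra h0
      have h1k : 2 ≤ |k| := by
        rcases lt_or_gt_of_ne h0 with h|h
        · have : k ≤ -2 := by omega
          rw [abs_of_neg (by omega)]; omega
        · have : 2 ≤ k := by omega
          rw [abs_of_pos (by omega)]; omega
      have h4k : 4 ≤ k^2 := by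
        have := sq_abs k
        nlinarith
      have hkey2 : (a*c+b*d)^2 + (p:ℤ)^2*k^2 = 4*(p:ℤ)^2 := by linear_combination key
      have hmul : (p:ℤ)^2*4 ≤ (p:ℤ)^2*k^2 := mul_le_mul_of_nonneg_left h4k (sq_nonneg _)
      have : (a*c+b*d)^2 = 0 := le_antisymm (by linarith) (sq_nonneg _)
      exact hacbd (pow_eq_zero_iff (n := 2) (by norm_num) |>.mp this)
    rw [hk0, mul_zero] at hk
    have hzero : a*d - b*c = 0 := by linarith
    have hsq : a^2 * (2*(p:ℤ)) = c^2 * (2*(p:ℤ)) := by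
      linear_combination c^2*h1 - a^2*h2 + (a*d+b*c)*hzero
    have hac2 : a^2 = c^2 := mul_right_cancel₀ (by positivity) hsq
    have hac : a = c := by
      have h' : (a - c) * (a + c) = 0 := by linear_combination hac2
      rcases mul_eq_zero.mp h' with h'' | h'' <;> omega
    subst hac
    refine Or.inl ⟨rfl, ?_⟩
    have : a * b = a * d := by linarith [hzero]
    exact (mul_left_cancel₀ ha0 this)
  · obtain ⟨k, hk⟩ := hd1
    have key : (a*c - b*d)^2 + ((p:ℤ)*k)^2 = 4*(p:ℤ)^2 := by
      rw [← hk]; linear_combination (c^2+d^2)*h1 + 2*(p:ℤ)*h2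
    -- hk : a*d + b*c = p*k ; k=0 would give ad+bc=0, but ad ≡ 1, bc ≡ 1 mod 6 → sum ≡ 2
    have had6 : (a*d) % 6 = 1 := by rw [Int.mul_emod, ha, hd]; rfl
    have hbc6 : (b*c) % 6 = 1 := by rw [Int.mul_emod, hb, hc]; rfl
    have hadbc : a*d + b*c ≠ 0 := by omega
    have hkeven : k % 2 = 0 := by
      have h2dvd : (a*d + b*c) % 2 = 0 := by omega
      rw [hk] at h2dvd
      rcases Int.emod_two_eq k with h | h
      · exact h
      · exfalso
        have : ((p:ℤ)*k) % 2 = 1 := by rw [Int.mul_emod, hpodd, h]; rfl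
        omega
    have hk0 : k ≠ 0 := fun h => hadbc (by rw [h, mul_zero] at hk; exact hk)
    have h4k : 4 ≤ k^2 := by
      have h1k : 2 ≤ |k| := by
        rcases lt_or_gt_of_ne hk0 with h|h
        · rw [abs_of_neg (by omega)]; omega
        · rw [abs_of_pos (by omega)]; omega
      have := sq_abs k
      nlinarith
    have hcon : (a*c-b*d)^2 = 0 := by
      have hkey2 : (a*c-b*d)^2 + (p:ℤ)^2*k^2 = 4*(p:ℤ)^2 := by linear_combination key
      have hmul : (p:ℤ)^2*4 ≤ (p:ℤ)^2*k^2 := mul_le_mul_of_nonneg_left h4k (sq_nonneg _)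
      exact le_antisymm (by linarith) (sq_nonneg _)
    have hzero : a*c - b*d = 0 := pow_eq_zero_iff (n := 2) (by norm_num) |>.mp hcon
    -- a^2 = d^2
    have hsq : a^2 * (2*(p:ℤ)) = d^2 * (2*(p:ℤ)) := by
      linear_combination d^2*h1 - a^2*h2 + (a*c+b*d)*hzero
    have had2 : a^2 = d^2 := mul_right_cancel₀ (by positivity) hsq
    have had : a = d := by
      have h' : (a - d) * (a + d) = 0 := by linear_combination had2
      rcases mul_eq_zero.mp h' with h'' | h'' <;> omega
    subst had
    refine Or.inr ⟨rfl, ?_⟩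
    have : a * b = a * c := by linarith [hzero]
    exact (mul_left_cancel₀ ha0 this)


lemma quad_card (P : ℤ × ℤ × ℤ → Prop)
    (hsym : ∀ x y z : ℤ, P (x,y,z) → P (y,x,z))
    (hneg : ∀ x y z : ℤ, P (x,y,z) → P (x,y,-z)) :
    ∃ m, Nat.card {t : ℤ × ℤ × ℤ | P t ∧ t.2.2 ≠ 0 ∧ t.1 ≠ t.2.1} = 4 * m := by
  classical
  set T : Set (ℤ × ℤ × ℤ) := {t | P t ∧ 0 < t.2.2 ∧ t.1 < t.2.1} with hT
  set S : Set (ℤ × ℤ × ℤ) := {t | P t ∧ t.2.2 ≠ 0 ∧ t.1 ≠ t.2.1} with hS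
  have hmemT : ∀ x y z : ℤ, (x,y,z) ∈ T ↔ (P (x,y,z) ∧ 0 < z ∧ x < y) := by
    intro x y z; rfl
  have hmemS : ∀ x y z : ℤ, (x,y,z) ∈ S ↔ (P (x,y,z) ∧ z ≠ 0 ∧ x ≠ y) := by
    intro x y z; rfl
  have hf : ∃ f : Bool × Bool × T → S, Function.Bijective f := by
    refine ⟨fun q =>
      ⟨(if q.1 then q.2.2.1.2.1 else q.2.2.1.1,
        if q.1 then q.2.2.1.1 else q.2.2.1.2.1,
        if q.2.1 then -q.2.2.1.2.2 else q.2.2.1.2.2), ?_⟩, ?_, ?_⟩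
    · obtain ⟨b1, b2, ⟨⟨x, y, z⟩, ht⟩⟩ := q
      obtain ⟨hP, hz, hxy⟩ := (hmemT x y z).mp ht
      cases b1 <;> cases b2 <;>
        simp only [Bool.false_eq_true, if_true, if_false]
      · exact (hmemS x y z).mpr ⟨hP, by omega, by omega⟩
      · exact (hmemS x y (-z)).mpr ⟨hneg _ _ _ hP, by omega, by omega⟩
      · exact (hmemS y x z).mpr ⟨hsym _ _ _ hP, by omega, by omega⟩
      · exact (hmemS y x (-z)).mpr ⟨hneg _ _ _ (hsym _ _ _ hP), by omega, by omega⟩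
    · rintro ⟨b1, b2, ⟨⟨x, y, z⟩, ht⟩⟩ ⟨c1, c2, ⟨⟨x', y', z'⟩, ht'⟩⟩ h
      obtain ⟨hP, hz, hxy⟩ := (hmemT x y z).mp ht
      obtain ⟨hP', hz', hxy'⟩ := (hmemT x' y' z').mp ht'
      simp only [Subtype.mk.injEq, Prod.mk.injEq] at h
      cases b1 <;> cases b2 <;> cases c1 <;> cases c2 <;>
        simp only [Bool.false_eq_true, if_true, if_false] at h <;>
        simp only [Prod.mk.injEq, Subtype.mk.injEq, true_and] <;>
        omega
    · rintro ⟨⟨x, y, z⟩, hs⟩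
      obtain ⟨hP, hz, hxy⟩ := (hmemS x y z).mp hs
      rcases lt_or_gt_of_ne hxy with h1 | h1 <;> rcases lt_or_gt_of_ne hz with h2 | h2
      · refine ⟨⟨false, true, ⟨(x, y, -z), (hmemT x y (-z)).mpr ⟨hneg _ _ _ hP, by omega, h1⟩⟩⟩,
          Subtype.ext (by simp)⟩
      · exact ⟨⟨false, false, ⟨(x, y, z), (hmemT x y z).mpr ⟨hP, h2, h1⟩⟩⟩,
          Subtype.ext (by simp)⟩
      · refine ⟨⟨true, true, ⟨(y, x, -z), (hmemT y x (-z)).mpr ⟨hneg _ _ _ (hsym _ _ _ hP), by omega, h1⟩⟩⟩,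
          Subtype.ext (by simp)⟩
      · exact ⟨⟨true, false, ⟨(y, x, z), (hmemT y x z).mpr ⟨hsym _ _ _ hP, h2, h1⟩⟩⟩,
          Subtype.ext (by simp)⟩
  obtain ⟨f, hf⟩ := hf
  refine ⟨Nat.card T, ?_⟩
  rw [← Nat.card_eq_of_bijective f hf, Nat.card_prod, Nat.card_prod]
  simp [Nat.card_eq_fintype_card]
  ring


lemma cast_mod_nat' (n : ℕ) [NeZero n] (p : ℕ) : ((p:ℕ) : ZMod n) = ((p % n : ℕ) : ZMod n) :=
  (ZMod.natCast_mod p n).symm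

lemma sq_ne_p (p : ℕ) (hp : p.Prime) (c : ℤ) : c^2 ≠ (p:ℤ) := by
  intro h
  have hirr := (Nat.prime_iff_prime_int.1 hp).irreducible
  have h' : (p:ℤ) = c * c := by linear_combination -h
  rcases hirr.isUnit_or_isUnit h' with hu | hu <;>
    rcases Int.isUnit_iff.mp hu with h1 | h1 <;>
    · rw [h1] at h
      have := hp.one_lt
      norm_num at h
      omega
lemma pick_sign (c : ℤ) (h2 : c % 2 = 1) (h3 : c % 3 ≠ 0) :
    ∃ x : ℤ, 6*x+1 = c ∨ 6*x+1 = -c := by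
  rcases (by omega : c % 6 = 1 ∨ c % 6 = 5) with h | h
  · exact ⟨(c-1)/6, by omega⟩
  · exact ⟨(-c-1)/6, by omega⟩

-- mod facts for u^2 + v^2 = 2p, p % 24 = 1
lemma mod_u (p : ℕ) (h24 : p % 24 = 1) (u v : ℤ) (h : u^2 + v^2 = 2*(p:ℤ)) :
    u % 2 = 1 ∧ u % 3 ≠ 0 := by
  constructor
  · by_contra h0
    have h2 : (2:ℤ) ∣ u := by omega
    obtain ⟨m, rfl⟩ := h2
    have key : ∀ m v : ZMod 4, (2*m)^2 + v^2 ≠ 2 := by decide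
    apply key (m : ZMod 4) (v : ZMod 4)
    have hc := congrArg (fun z : ℤ => (z : ZMod 4)) h
    push_cast at hc
    rw [hc, cast_mod_nat' 4 p, (by omega : p % 4 = 1)]
    norm_num
  · intro h0
    have h3 : (3:ℤ) ∣ u := by omega
    obtain ⟨m, rfl⟩ := h3
    have key : ∀ m v : ZMod 3, (3*m)^2 + v^2 ≠ 2 := by decide
    apply key (m : ZMod 3) (v : ZMod 3)
    have hc := congrArg (fun z : ℤ => (z : ZMod 3)) h
    push_cast at hc
    rw [hc, cast_mod_nat' 3 p, (by omega : p % 3 = 1)]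
    norm_num
-- mod facts for c^2 + 6 d^2 = p, p % 24 = 1
lemma mod_c (p : ℕ) (h24 : p % 24 = 1) (c d : ℤ) (h : c^2 + 6*d^2 = (p:ℤ)) :
    c % 2 = 1 ∧ c % 3 ≠ 0 := by
  constructor
  · by_contra h0
    have h2 : (2:ℤ) ∣ c := by omega
    obtain ⟨m, rfl⟩ := h2
    have key : ∀ m d : ZMod 2, (2*m)^2 + 6*d^2 ≠ 1 := by decide
    apply key (m : ZMod 2) (d : ZMod 2)
    have hc := congrArg (fun z : ℤ => (z : ZMod 2)) h
    push_cast at hc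
    rw [hc, cast_mod_nat' 2 p, (by omega : p % 2 = 1)]
    norm_num
  · intro h0
    have h3 : (3:ℤ) ∣ c := by omega
    obtain ⟨m, rfl⟩ := h3
    have key : ∀ m d : ZMod 3, (3*m)^2 + 6*d^2 ≠ 1 := by decide
    apply key (m : ZMod 3) (d : ZMod 3)
    have hc := congrArg (fun z : ℤ => (z : ZMod 3)) h
    push_cast at hc
    rw [hc, cast_mod_nat' 3 p, (by omega : p % 3 = 1)]
    norm_num

/-- `A(n)`: the number of triples `(x, y, z) ∈ ℤ³` with
`(6x+1)² + (6y+1)² + 12z² = n`. -/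
noncomputable def A (n : ℕ) : ℕ :=
  Nat.card {t : ℤ × ℤ × ℤ //
    (6 * t.1 + 1) ^ 2 + (6 * t.2.1 + 1) ^ 2 + 12 * t.2.2 ^ 2 = (n : ℤ)}

theorem A_two_mul_prime_mod4_eq_zero (p : ℕ) (hp : p.Prime)
    (h8 : p % 8 = 1 ∨ p % 8 = 3) (h12 : 2 * p % 12 = 2) :
    A (2 * p) % 4 = 0 := by
  classical
  have hp2 : 2 ≤ p := hp.two_le
  have hp6 : p % 6 = 1 := by omega
  have hpodd : p % 2 = 1 := by omega
  -- the defining predicate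
  set P : ℤ × ℤ × ℤ → Prop :=
    fun t => (6 * t.1 + 1) ^ 2 + (6 * t.2.1 + 1) ^ 2 + 12 * t.2.2 ^ 2 = ((2*p : ℕ) : ℤ)
    with hPdef
  have hcast : ((2*p : ℕ) : ℤ) = 2*(p:ℤ) := by push_cast; ring
  have hPiff : ∀ x y z : ℤ,
      P (x,y,z) ↔ (6*x+1)^2 + (6*y+1)^2 + 12*z^2 = 2*(p:ℤ) := by
    intro x y z
    rw [hPdef, hcast]
  -- sets
  set sol : Set (ℤ × ℤ × ℤ) := {t | P t} with hsol
  set s0 : Set (ℤ × ℤ × ℤ) := {t | P t ∧ t.2.2 ≠ 0 ∧ t.1 ≠ t.2.1} with hs0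
  set s1 : Set (ℤ × ℤ × ℤ) := {t | P t ∧ t.2.2 = 0} with hs1
  set s2 : Set (ℤ × ℤ × ℤ) := {t | P t ∧ t.2.2 ≠ 0 ∧ t.1 = t.2.1} with hs2
  -- A (2p) is ncard of sol
  have hA : A (2*p) = sol.ncard := by
    rw [← Nat.card_coe_set_eq]
    rfl
  -- finiteness
  have hbound : ∀ w : ℤ, (6*w+1)^2 ≤ 2*(p:ℤ) → w ∈ Set.Icc (-(2*(p:ℤ))) (2*(p:ℤ)) := by
    intro w hw
    have hN1 : 1 ≤ 2*(p:ℤ) := by push_cast; omega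
    have h1 : 6*w+1 ≤ 2*(p:ℤ) := by nlinarith [sq_nonneg (6*w+1 - 2*(p:ℤ))]
    have h2 : -(2*(p:ℤ)) ≤ 6*w+1 := by nlinarith [sq_nonneg (6*w+1 + 2*(p:ℤ))]
    simp only [Set.mem_Icc]
    omega
  have hfin : sol.Finite := by
    apply Set.Finite.subset
      (((Set.finite_Icc (-(2*(p:ℤ))) (2*(p:ℤ))).prod
        ((Set.finite_Icc (-(2*(p:ℤ))) (2*(p:ℤ))).prod
          (Set.finite_Icc (-(2*(p:ℤ))) (2*(p:ℤ))))))
    rintro ⟨x, y, z⟩ ht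
    have hE := (hPiff x y z).mp ht
    have hx := hbound x (by nlinarith [sq_nonneg (6*y+1), sq_nonneg z])
    have hy := hbound y (by nlinarith [sq_nonneg (6*x+1), sq_nonneg z])
    have hz : z ∈ Set.Icc (-(2*(p:ℤ))) (2*(p:ℤ)) := by
      have h12z : 12*z^2 ≤ 2*(p:ℤ) := by nlinarith [sq_nonneg (6*x+1), sq_nonneg (6*y+1)]
      have hN1 : 1 ≤ 2*(p:ℤ) := by push_cast; omega
      simp only [Set.mem_Icc]
      constructor <;> nlinarith [sq_nonneg (z - 2*(p:ℤ)), sq_nonneg (z + 2*(p:ℤ))]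
    exact ⟨hx, hy, hz⟩
  have hf0 : s0.Finite := hfin.subset (fun t ht => ht.1)
  have hf1 : s1.Finite := hfin.subset (fun t ht => ht.1)
  have hf2 : s2.Finite := hfin.subset (fun t ht => ht.1)
  -- partition
  have hsplit : sol = (s1 ∪ s2) ∪ s0 := by
    ext ⟨x, y, z⟩
    simp only [hsol, hs0, hs1, hs2, Set.mem_union, Set.mem_setOf_eq]
    by_cases hz : z = 0 <;> by_cases hxy : x = y <;> tauto
  have hdis12 : Disjoint s1 s2 := by
    rw [Set.disjoint_left]
    rintro t ⟨_, hz⟩ ⟨_, hz', _⟩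
    exact hz' hz
  have hdis0 : Disjoint (s1 ∪ s2) s0 := by
    rw [Set.disjoint_left]
    rintro t (⟨_, hz⟩ | ⟨_, _, hxy⟩) ⟨_, hz', hxy'⟩
    · exact hz' hz
    · exact hxy' hxy
  have hcardsum : sol.ncard = s1.ncard + s2.ncard + s0.ncard := by
    rw [hsplit, Set.ncard_union_eq hdis0 (hf1.union hf2) hf0,
      Set.ncard_union_eq hdis12 hf1 hf2]
  -- s0 has cardinality divisible by 4
  obtain ⟨m, hm⟩ := quad_card P
    (fun x y z h => by
      rw [hPiff] at h ⊢; linarith)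
    (fun x y z h => by
      rw [hPiff] at h ⊢
      have : (-z)^2 = z^2 := by ring
      rw [this]; exact h)
  have hs0card : s0.ncard = 4 * m := by
    rw [← Nat.card_coe_set_eq]
    exact hm
  -- now the two cases
  rcases h8 with h8 | h8
  · -- p ≡ 1 (mod 8) : s1 and s2 both have exactly 2 elements
    have h24 : p % 24 = 1 := by omega
    haveI : Fact p.Prime := ⟨hp⟩
    -- two squares for p
    obtain ⟨s, t, hst⟩ := Nat.Prime.sq_add_sq (p := p) (by omega)
    have hst' : (s:ℤ)^2 + (t:ℤ)^2 = (p:ℤ) := by exact_mod_cast hst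
    have huv : ((s:ℤ)+t)^2 + ((s:ℤ)-t)^2 = 2*(p:ℤ) := by linear_combination 2*hst'
    obtain ⟨hu2, hu3⟩ := mod_u p h24 ((s:ℤ)+t) ((s:ℤ)-t) huv
    obtain ⟨hv2, hv3⟩ := mod_u p h24 ((s:ℤ)-t) ((s:ℤ)+t) (by linarith)
    obtain ⟨x0, hx0⟩ := pick_sign _ hu2 hu3
    obtain ⟨y0, hy0⟩ := pick_sign _ hv2 hv3
    have hx0sq : (6*x0+1)^2 = ((s:ℤ)+t)^2 := by rcases hx0 with h | h <;> rw [h] <;> ring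
    have hy0sq : (6*y0+1)^2 = ((s:ℤ)-t)^2 := by rcases hy0 with h | h <;> rw [h] <;> ring
    have hE1 : (6*x0+1)^2 + (6*y0+1)^2 = 2*(p:ℤ) := by rw [hx0sq, hy0sq]; exact huv
    have hx0y0 : x0 ≠ y0 := by
      intro h
      subst h
      exact sq_ne_p p hp (6*x0+1) (by linarith)
    -- representation by x^2 + 6 y^2
    obtain ⟨c, d, hcd⟩ := exists_rep p hp h24
    obtain ⟨hc2, hc3⟩ := mod_c p h24 c d hcd
    obtain ⟨x1, hx1⟩ := pick_sign _ hc2 hc3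
    have hx1sq : (6*x1+1)^2 = c^2 := by rcases hx1 with h | h <;> rw [h] <;> ring
    have hE2 : (6*x1+1)^2 + 6*d^2 = (p:ℤ) := by rw [hx1sq]; exact hcd
    have hd0 : d ≠ 0 := by
      intro h
      subst h
      exact sq_ne_p p hp (6*x1+1) (by linarith)
    -- s1 is the explicit pair
    have hs1eq : s1 = {(x0, y0, (0:ℤ)), (y0, x0, (0:ℤ))} := by
      ext ⟨x, y, z⟩
      simp only [hs1, Set.mem_setOf_eq, Set.mem_insert_iff, Set.mem_singleton_iff,
        Prod.mk.injEq]
      constructor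
      · rintro ⟨hPt, hz⟩
        have hE := (hPiff x y z).mp hPt
        rw [hz] at hE
        have hE' : (6*x+1)^2 + (6*y+1)^2 = 2*(p:ℤ) := by linarith
        have := U1 p hp hpodd (6*x+1) (6*y+1) (6*x0+1) (6*y0+1)
          (by omega) (by omega) (by omega) (by omega) hE' hE1
        rcases this with ⟨h1, h2⟩ | ⟨h1, h2⟩
        · exact Or.inl ⟨by omega, by omega, hz⟩
        · exact Or.inr ⟨by omega, by omega, hz⟩
      · rintro (⟨rfl, rfl, rfl⟩ | ⟨rfl, rfl, rfl⟩) <;>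
          refine ⟨(hPiff _ _ _).mpr (by linarith), rfl⟩
    have hs1card : s1.ncard = 2 := by
      rw [hs1eq]
      rw [Set.ncard_pair]
      intro h
      rw [Prod.mk.injEq] at h
      exact hx0y0 h.1
    -- s2 is the explicit pair
    have hs2eq : s2 = {(x1, x1, d), (x1, x1, -d)} := by
      ext ⟨x, y, z⟩
      simp only [hs2, Set.mem_setOf_eq, Set.mem_insert_iff, Set.mem_singleton_iff,
        Prod.mk.injEq]
      constructor
      · rintro ⟨hPt, hz, hxy⟩
        have hE := (hPiff x y z).mp hPt
        have hxy' : x = y := hxy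
        rw [← hxy'] at hE
        have hE' : (6*x+1)^2 + 6*z^2 = (p:ℤ) := by linarith
        have := U2 p hp (6*x+1) z (6*x1+1) d (by omega) (by omega) hz hE' hE2
        rcases this with ⟨h1, h2 | h2⟩
        · exact Or.inl ⟨by omega, by omega, h2⟩
        · exact Or.inr ⟨by omega, by omega, h2⟩
      · rintro (⟨rfl, rfl, rfl⟩ | ⟨rfl, rfl, rfl⟩) <;>
          exact ⟨(hPiff _ _ _).mpr (by linarith), by simpa using hd0, rfl⟩
    have hs2card : s2.ncard = 2 := by
      rw [hs2eq]
      rw [Set.ncard_pair]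
      intro h
      rw [Prod.mk.injEq, Prod.mk.injEq] at h
      have := h.2.2
      omega
    rw [hA, hcardsum, hs0card, hs1card, hs2card]
    omega
  · -- p ≡ 3 (mod 8) : s1 and s2 are empty (mod 16 argument)
    have h16 : (2*p) % 16 = 6 := by omega
    have hcast16 : (((2*p : ℕ) : ℤ) : ZMod 16) = 6 := by
      push_cast
      rw [show ((2:ZMod 16) * ((p:ℕ) : ZMod 16)) = (((2*p : ℕ) : ℕ) : ZMod 16) by push_cast; ring,
        cast_mod_nat 16 (2*p), h16]
      norm_num
    have hs1empty : s1 = ∅ := by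
      ext ⟨x, y, z⟩
      simp only [hs1, Set.mem_setOf_eq, Set.mem_empty_iff_false, iff_false]
      rintro ⟨hPt, hz⟩
      have key : ∀ u v : ZMod 16, (6*u+1)^2 + (6*v+1)^2 ≠ 6 := by decide
      apply key (x : ZMod 16) (y : ZMod 16)
      have hE : (6*x+1)^2 + (6*y+1)^2 = ((2*p : ℕ) : ℤ) := by
        have := hPt
        rw [hPdef] at this
        simp only at this
        rw [hz] at this
        linarith
      have hc := congrArg (fun w : ℤ => (w : ZMod 16)) hE
      push_cast at hc
      rw [hc]
      exact_mod_cast hcast16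
    have hs2empty : s2 = ∅ := by
      ext ⟨x, y, z⟩
      simp only [hs2, Set.mem_setOf_eq, Set.mem_empty_iff_false, iff_false]
      rintro ⟨hPt, hz, hxy⟩
      have key : ∀ u w : ZMod 16, (6*u+1)^2 + (6*u+1)^2 + 12*w^2 ≠ 6 := by decide
      apply key (x : ZMod 16) (z : ZMod 16)
      have hxy' : x = y := hxy
      have hE : (6*x+1)^2 + (6*x+1)^2 + 12*z^2 = ((2*p : ℕ) : ℤ) := by
        have := hPt
        rw [hPdef] at this
        simp only at this
        rw [← hxy'] at this
        linarith
      have hc := congrArg (fun w : ℤ => (w : ZMod 16)) hE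
      push_cast at hc
      rw [hc]
      exact_mod_cast hcast16
    rw [hA, hcardsum, hs0card, hs1empty, hs2empty]
    simp
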